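/- Let q, a, x, u, v, y, z ∈ ℂ with 0 < |q| < 1, |u| ≤ 1, |v| ≤ 1, |a y| < 1, |a z| < 1, x ≠ 0, and 1 - a q^j x ≠ 0 for all j ≥ 0, and let n ∈ ℕ. Define g : ℂ → ℂ by g(t) = ∑_{m=0}^{∞} u^{C(m,2)} (q^n;q)_m (a y)^m / ((q;q)_m (a t;q)_{n+m}). Then T(z D_q|v) g, evaluated at x, equals (1/(a x;q)_n) · ∑_{m=0}^{∞} u^{C(m,2)} ((q^n;q)_m (a y)^m / ((q;q)_m (a q^n x;q)_m)) · ∑_{l=0}^{∞} v^{C(l,2)} (q^{n+m};q)_l (a z)^l / ((q;q)_l (a q^{n+m} x;q)_l). -/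

import Mathlib

/-- The finite q-shifted factorial (a;q)_n = ∏_{j=0}^{n-1} (1 - a q^j). -/
noncomputable def qPoch (q a : ℂ) (n : ℕ) : ℂ :=
  ∏ j ∈ Finset.range n, (1 - a * q ^ j)

lemma qPoch_zero (q a : ℂ) : qPoch q a 0 = 1 := by simp [qPoch]

lemma qPoch_succ (q a : ℂ) (M : ℕ) : qPoch q a (M+1) = qPoch q a M * (1 - a * q ^ M) :=
  Finset.prod_range_succ _ _

lemma qPoch_succ' (q a : ℂ) (M : ℕ) : qPoch q a (M+1) = (1 - a) * qPoch q (a*q) M := by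
  rw [qPoch, Finset.prod_range_succ', mul_comm]
  simp only [pow_zero, mul_one, qPoch]
  congr 1
  apply Finset.prod_congr rfl
  intro j _
  rw [pow_succ']; ring

lemma qPoch_add (q a : ℂ) (M L : ℕ) :
    qPoch q a (M+L) = qPoch q a M * qPoch q (a * q ^ M) L := by
  rw [qPoch, Finset.prod_range_add]
  congr 1
  apply Finset.prod_congr rfl
  intro j _
  rw [pow_add]; ring

lemma qPoch_ne_zero {q a : ℂ} (h : ∀ j : ℕ, 1 - a * q ^ j ≠ 0) (M : ℕ) : qPoch q a M ≠ 0 :=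
  Finset.prod_ne_zero_iff.2 fun j _ => h j

/-- key one-step identity -/
lemma Dq_step (q c t : ℂ) (ht : t ≠ 0) (hc : ∀ j : ℕ, 1 - c * q ^ j ≠ 0) (M : ℕ) :
    (1 / qPoch q c M - 1 / qPoch q (c*q) M) / t
      = (c/t) * (1 - q ^ M) / qPoch q c (M+1) := by
  cases M with
  | zero => simp [qPoch_zero]
  | succ M =>
    have hB : qPoch q (c*q) M ≠ 0 := by
      apply qPoch_ne_zero
      intro j
      have := hc (j+1)
      rw [pow_succ] at this
      intro hcon; apply this; rw [← hcon]; ring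
    have h0 : (1 : ℂ) - c ≠ 0 := by simpa using hc 0
    have hM : (1 : ℂ) - c * q ^ (M+1) ≠ 0 := hc (M+1)
    rw [qPoch_succ' q c M, qPoch_succ q (c*q) M, qPoch_succ' q c (M+1),
        qPoch_succ q (c*q) M]
    have : c * q * q ^ M = c * q ^ (M+1) := by ring
    rw [this]
    field_simp
    ring

lemma geom_partial {r : ℝ} (h0 : 0 ≤ r) (h1 : r < 1) (L : ℕ) :
    ∑ j ∈ Finset.range L, r ^ j ≤ (1-r)⁻¹ := by
  rw [geom_sum_eq (by linarith : r ≠ 1) L]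
  have hr : 0 < 1 - r := by linarith
  have h2 : (r ^ L - 1) / (r - 1) = (1 - r ^ L) / (1 - r) := by
    rw [← neg_div_neg_eq]; ring_nf
  rw [h2, inv_eq_one_div]
  gcongr
  nlinarith [pow_nonneg h0 L]

lemma abs_qPoch_le {q : ℂ} (hq1 : ‖q‖ < 1) (c : ℂ) (M : ℕ) :
    ‖qPoch q c M‖ ≤ Real.exp (‖c‖ * (1 - ‖q‖)⁻¹) := by
  rw [qPoch, norm_prod]
  have step : ∀ j ∈ Finset.range M,
      ‖1 - c * q ^ j‖ ≤ Real.exp (‖c‖ * ‖q‖ ^ j) := by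
    intro j _
    have h1 : ‖1 - c * q ^ j‖ ≤ 1 + ‖c‖ * ‖q‖ ^ j := by
      calc ‖1 - c * q ^ j‖ ≤ ‖1‖ + ‖c * q ^ j‖ :=
            norm_sub_le _ _
        _ = 1 + ‖c‖ * ‖q‖ ^ j := by
            rw [norm_one, norm_mul, norm_pow]
    refine h1.trans ?_
    have := Real.add_one_le_exp (‖c‖ * ‖q‖ ^ j)
    linarith
  calc (∏ j ∈ Finset.range M, ‖1 - c * q ^ j‖)
      ≤ ∏ j ∈ Finset.range M, Real.exp (‖c‖ * ‖q‖ ^ j) := by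
        apply Finset.prod_le_prod (fun j _ => (norm_nonneg _)) step
    _ = Real.exp (∑ j ∈ Finset.range M, ‖c‖ * ‖q‖ ^ j) :=
        (Real.exp_sum _ _).symm
    _ ≤ Real.exp (‖c‖ * (1 - ‖q‖)⁻¹) := by
        apply Real.exp_le_exp.2
        rw [← Finset.mul_sum]
        apply mul_le_mul_of_nonneg_left (geom_partial (norm_nonneg q) hq1 M)
          (norm_nonneg c)

lemma one_sub_sum_le_prod (L : ℕ) (f : ℕ → ℝ) (h0 : ∀ j, 0 ≤ f j) (h1 : ∀ j, f j ≤ 1) :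
    1 - ∑ j ∈ Finset.range L, f j ≤ ∏ j ∈ Finset.range L, (1 - f j) := by
  induction L with
  | zero => simp
  | succ L ih =>
    rw [Finset.sum_range_succ, Finset.prod_range_succ]
    have hs : 0 ≤ ∑ j ∈ Finset.range L, f j :=
      Finset.sum_nonneg fun j _ => h0 j
    nlinarith [h0 L, h1 L, ih]

lemma qPoch_lower {q c : ℂ} (hq1 : ‖q‖ < 1)
    (hc : ∀ j : ℕ, 1 - c * q ^ j ≠ 0) :
    ∃ ε > 0, ∀ M : ℕ, ε ≤ ‖qPoch q c M‖ := by
  -- choose J with |c| * |q|^J * (1-|q|)⁻¹ ≤ 1/2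
  obtain ⟨J, hJ⟩ : ∃ J : ℕ, ‖c‖ * ‖q‖ ^ J * (1 - ‖q‖)⁻¹ ≤ 1/2 := by
    have hlim : Filter.Tendsto (fun J : ℕ => ‖c‖ * ‖q‖ ^ J *
        (1 - ‖q‖)⁻¹) Filter.atTop (nhds (‖c‖ * 0 * (1 - ‖q‖)⁻¹)) := by
      apply Filter.Tendsto.mul_const
      exact (tendsto_pow_atTop_nhds_zero_of_lt_one (norm_nonneg q) hq1).const_mul _
    rw [mul_zero, zero_mul] at hlim
    exact (hlim.eventually_le_const (by norm_num : (0:ℝ) < 1/2)).exists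
  -- δ : min of |qPoch q c M| over M ≤ J
  set F : ℕ → ℝ := fun M => ‖qPoch q c M‖ with hF
  have hFpos : ∀ M, 0 < F M := fun M => norm_pos_iff.mpr (qPoch_ne_zero hc M)
  set δ : ℝ := (Finset.range (J+1)).inf' (by simp) F with hδ
  have hδpos : 0 < δ := by
    rw [hδ, Finset.lt_inf'_iff]
    exact fun M _ => hFpos M
  refine ⟨δ/2, by linarith, fun M => ?_⟩
  rcases le_or_gt M J with hMJ | hMJ
  · have : δ ≤ F M := Finset.inf'_le F (Finset.mem_range.2 (by omega))
    calc δ/2 ≤ δ := by linarith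
      _ ≤ F M := this
  · obtain ⟨L, rfl⟩ : ∃ L, M = J + L := ⟨M - J, by omega⟩
    rw [qPoch_add, norm_mul]
    have h1 : δ ≤ ‖qPoch q c J‖ :=
      Finset.inf'_le F (Finset.mem_range.2 (by omega))
    have h2 : (1:ℝ)/2 ≤ ‖qPoch q (c * q ^ J) L‖ := by
      rw [qPoch, norm_prod]
      have hterm : ∀ j, ‖c * q ^ J‖ * ‖q‖ ^ j ≤ 1/2 := by
        intro j
        have hq0 : (0:ℝ) ≤ ‖q‖ := norm_nonneg q
        have h3 : ‖q‖ ^ j ≤ 1 := pow_le_one₀ hq0 hq1.le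
        have h4 : (1:ℝ) ≤ (1 - ‖q‖)⁻¹ := by
          rw [one_le_inv_iff₀]
          constructor <;> linarith
        have h5 : ‖c‖ * ‖q‖ ^ J ≤ 1/2 := by
          nlinarith [norm_nonneg c, pow_nonneg hq0 J]
        calc ‖c * q ^ J‖ * ‖q‖ ^ j
            ≤ ‖c * q ^ J‖ * 1 := by
              apply mul_le_mul_of_nonneg_left h3 (norm_nonneg _)
          _ = ‖c‖ * ‖q‖ ^ J := by rw [mul_one, norm_mul, norm_pow]
          _ ≤ 1/2 := h5
      calc (1:ℝ)/2 ≤ 1 - ∑ j ∈ Finset.range L, ‖c * q ^ J‖ * ‖q‖ ^ j := by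
            have : ∑ j ∈ Finset.range L, ‖c * q ^ J‖ * ‖q‖ ^ j
                ≤ 1/2 := by
              rw [← Finset.mul_sum]
              have := geom_partial (norm_nonneg q) hq1 L
              calc ‖c * q ^ J‖ * ∑ j ∈ Finset.range L, ‖q‖ ^ j
                  ≤ ‖c * q ^ J‖ * (1 - ‖q‖)⁻¹ :=
                    mul_le_mul_of_nonneg_left this (norm_nonneg _)
                _ = ‖c‖ * ‖q‖ ^ J * (1 - ‖q‖)⁻¹ := by
                    rw [norm_mul, norm_pow]
                _ ≤ 1/2 := hJ
            linarith
        _ ≤ ∏ j ∈ Finset.range L, (1 - ‖c * q ^ J‖ * ‖q‖ ^ j) := by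
            apply one_sub_sum_le_prod
            · intro j
              positivity
            · intro j
              have := hterm j
              linarith
        _ ≤ ∏ j ∈ Finset.range L, ‖1 - c * q ^ J * q ^ j‖ := by
            apply Finset.prod_le_prod
            · intro j _
              have := hterm j
              linarith
            · intro j _
              have hn := norm_sub_norm_le (1:ℂ) (c * q ^ J * q ^ j)
              rw [norm_one] at hn
              have he : ‖c * q ^ J * q ^ j‖
                  = ‖c * q ^ J‖ * ‖q‖ ^ j := by
                rw [norm_mul, norm_pow]
              linarith
    calc δ/2 = δ * (1/2) := by ring
      _ ≤ ‖qPoch q c J‖ * ‖qPoch q (c * q ^ J) L‖ := by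
          apply mul_le_mul h1 h2 (by norm_num) (norm_nonneg _)

lemma term_split (v1 u1 Pm aym Pml zl al azl : ℂ) {Pn Qm Ql Rm Rl : ℂ}
    (hPn : Pn ≠ 0) (hQm : Qm ≠ 0) (hQl : Ql ≠ 0) (hRm : Rm ≠ 0) (hRl : Rl ≠ 0)
    (hz : azl = al * zl) :
    v1 * (zl / Ql) * ((u1 * Pm * aym / Qm) * (al * Pml) / (Pn * (Rm * Rl)))
      = 1 / Pn * (u1 * (Pm * aym / (Qm * Rm)) * (v1 * Pml * azl / (Ql * Rl))) := by
  subst hz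
  simp only [div_eq_mul_inv, mul_inv, one_mul]
  ring

/-- The q-differential operator: (D_q f)(x) = (f(x) - f(qx))/x. -/
noncomputable def Dq (q : ℂ) (f : ℂ → ℂ) : ℂ → ℂ :=
  fun x => (f x - f (q * x)) / x

/-- The deformed q-exponential operator:
T(y D_q|u) f(x) = ∑_{m≥0} u^{C(m,2)} (y^m/(q;q)_m) (D_q^m f)(x). -/
noncomputable def Tq (q u y : ℂ) (f : ℂ → ℂ) (x : ℂ) : ℂ :=
  ∑' m : ℕ, u ^ (m.choose 2) * (y ^ m / qPoch q q m) * ((Dq q)^[m] f x)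

theorem stmt12 (q a x u v y z : ℂ) (n : ℕ)
    (hq0 : 0 < ‖q‖) (hq1 : ‖q‖ < 1)
    (hu : ‖u‖ ≤ 1) (hv : ‖v‖ ≤ 1)
    (hay : ‖a * y‖ < 1) (haz : ‖a * z‖ < 1) (hx : x ≠ 0)
    (h : ∀ j : ℕ, 1 - a * q ^ j * x ≠ 0) :
    Tq q v z
        (fun t => ∑' m : ℕ,
          u ^ (m.choose 2) * qPoch q (q ^ n) m * (a * y) ^ m /
            (qPoch q q m * qPoch q (a * t) (n + m))) x =
      1 / qPoch q (a * x) n *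
        ∑' m : ℕ,
          u ^ (m.choose 2) *
            (qPoch q (q ^ n) m * (a * y) ^ m /
              (qPoch q q m * qPoch q (a * q ^ n * x) m)) *
            ∑' l : ℕ,
              v ^ (l.choose 2) * qPoch q (q ^ (n + m)) l * (a * z) ^ l /
                (qPoch q q l * qPoch q (a * q ^ (n + m) * x) l) := by
  have hq : q ≠ 0 := by
    intro hq'; rw [hq'] at hq0; simp at hq0
  have hqa : (0:ℝ) ≤ ‖q‖ := norm_nonneg q
  have hfact : ∀ k j : ℕ, (1:ℂ) - a * q ^ k * x * q ^ j ≠ 0 := by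
    intro k j hcon
    apply h (k + j)
    rw [pow_add]
    linear_combination hcon
  have horb : ∀ k : ℕ, ∀ j : ℕ, (1:ℂ) - (a * (q ^ k * x)) * q ^ j ≠ 0 := by
    intro k j hcon
    exact hfact k j (by linear_combination hcon)
  have haxfac : ∀ j : ℕ, (1:ℂ) - (a * x) * q ^ j ≠ 0 := by
    intro j hcon
    exact hfact 0 j (by rw [pow_zero]; linear_combination hcon)
  have hqfac : ∀ j : ℕ, (1:ℂ) - q * q ^ j ≠ 0 := by
    intro j hcon
    have h1 : q * q ^ j = 1 := by linear_combination -hcon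
    have h2 : ‖q‖ * ‖q‖ ^ j = 1 := by
      rw [← norm_pow, ← norm_mul, h1, norm_one]
    nlinarith [pow_nonneg hqa j, pow_le_one₀ hqa hq1.le (n := j)]
  have hQ : ∀ m : ℕ, qPoch q q m ≠ 0 := fun m => qPoch_ne_zero hqfac m
  have hPorb : ∀ (k M : ℕ), qPoch q (a * (q ^ k * x)) M ≠ 0 :=
    fun k M => qPoch_ne_zero (horb k) M
  have hPk : ∀ (k M : ℕ), qPoch q (a * q ^ k * x) M ≠ 0 :=
    fun k M => qPoch_ne_zero (fun j hcon => hfact k j (by linear_combination hcon)) M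
  have hPax : ∀ M : ℕ, qPoch q (a * x) M ≠ 0 := fun M => qPoch_ne_zero haxfac M
  -- uniform bounds
  set E : ℝ := Real.exp ((1 - ‖q‖)⁻¹) with hE_def
  have hEpos : 0 < E := Real.exp_pos _
  have hinvnn : (0:ℝ) ≤ (1 - ‖q‖)⁻¹ := by
    have : (0:ℝ) < 1 - ‖q‖ := by linarith
    positivity
  have hE : ∀ (c : ℂ), ‖c‖ ≤ 1 → ∀ M : ℕ, ‖qPoch q c M‖ ≤ E := by
    intro c hc M
    refine (abs_qPoch_le hq1 c M).trans ?_
    apply Real.exp_le_exp.2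
    nlinarith [norm_nonneg c]
  have hqpow : ∀ j : ℕ, ‖(q:ℂ) ^ j‖ ≤ 1 := by
    intro j; rw [norm_pow]; exact pow_le_one₀ hqa hq1.le
  have hay' : ‖a‖ * ‖y‖ < 1 := by rwa [norm_mul] at hay
  have haz' : ‖a‖ * ‖z‖ < 1 := by rwa [norm_mul] at haz
  obtain ⟨εq, hεqpos, hεq⟩ := qPoch_lower hq1 hqfac
  obtain ⟨ε0, hε0pos, hε0⟩ := qPoch_lower hq1 haxfac
  -- coefficients
  set C : ℕ → ℂ := fun m =>
    u ^ (m.choose 2) * qPoch q (q ^ n) m * (a * y) ^ m / qPoch q q m with hC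
  have hCb : ∀ m : ℕ, ‖C m‖ ≤ E / εq * (‖a‖ * ‖y‖) ^ m := by
    intro m
    rw [hC]
    simp only []
    simp only [norm_div, norm_mul, norm_pow]
    calc ‖u‖ ^ m.choose 2 * ‖qPoch q (q ^ n) m‖ *
          (‖a‖ * ‖y‖) ^ m / ‖qPoch q q m‖
        ≤ 1 * E * (‖a‖ * ‖y‖) ^ m / εq := by
          gcongr
          · exact pow_le_one₀ (norm_nonneg u) hu
          · exact hE _ (hqpow n) m
          · exact hεq m
      _ = E / εq * (‖a‖ * ‖y‖) ^ m := by ring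
  -- summability of the inner families
  have hS : ∀ l k : ℕ, Summable (fun m : ℕ =>
      C m * (a ^ l * qPoch q (q ^ (n + m)) l) / qPoch q (a * (q ^ k * x)) (n + m + l)) := by
    intro l k
    obtain ⟨εk, hεkpos, hεk⟩ := qPoch_lower hq1 (horb k)
    apply Summable.of_norm_bounded
      (g := fun m => (E / εq * (‖a‖ ^ l * E) / εk) * (‖a‖ * ‖y‖) ^ m)
    · exact ((summable_geometric_of_lt_one (by positivity) hay').mul_left _)
    intro m
    simp only [norm_div, norm_mul, norm_pow]
    calc ‖C m‖ * (‖a‖ ^ l * ‖qPoch q (q ^ (n + m)) l‖) /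
          ‖qPoch q (a * (q ^ k * x)) (n + m + l)‖
        ≤ (E / εq * (‖a‖ * ‖y‖) ^ m) * (‖a‖ ^ l * E) / εk := by
          gcongr
          · exact hCb m
          · exact hE _ (hqpow (n + m)) l
          · exact hεk _
      _ = (E / εq * (‖a‖ ^ l * E) / εk) * (‖a‖ * ‖y‖) ^ m := by ring
  -- the function g
  set g : ℂ → ℂ := fun t => ∑' m : ℕ,
      u ^ (m.choose 2) * qPoch q (q ^ n) m * (a * y) ^ m /
        (qPoch q q m * qPoch q (a * t) (n + m)) with hg
  -- iterated q-derivative of g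
  have hiter : ∀ l k : ℕ, (Dq q)^[l] g (q ^ k * x) = ∑' m : ℕ,
      C m * (a ^ l * qPoch q (q ^ (n + m)) l) / qPoch q (a * (q ^ k * x)) (n + m + l) := by
    intro l
    induction l with
    | zero =>
      intro k
      simp only [Function.iterate_zero, id_eq, hg]
      apply tsum_congr
      intro m
      simp only [pow_zero, one_mul, Nat.add_zero, qPoch_zero, mul_one, hC]
      rw [div_div]
    | succ l ih =>
      intro k
      rw [Function.iterate_succ_apply']
      simp only [Dq]
      have hqk : q * (q ^ k * x) = q ^ (k + 1) * x := by ring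
      rw [hqk, ih k, ih (k + 1)]
      rw [← Summable.tsum_sub (hS l k) (hS l (k + 1)), ← tsum_div_const]
      apply tsum_congr
      intro m
      have ht : q ^ k * x ≠ 0 := mul_ne_zero (pow_ne_zero k hq) hx
      have harg : a * (q ^ (k + 1) * x) = (a * (q ^ k * x)) * q := by ring
      rw [harg]
      have hXfact : ∀ (X P1 P2 t : ℂ), (X / P1 - X / P2) / t = X * ((1 / P1 - 1 / P2) / t) := by
        intros X P1 P2 t
        rw [← mul_one_div X P1, ← mul_one_div X P2, ← mul_sub, mul_div_assoc]
      rw [hXfact]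
      rw [Dq_step q (a * (q ^ k * x)) (q ^ k * x) ht (horb k) (n + m + l)]
      rw [mul_div_cancel_right₀ a ht]
      rw [show n + m + (l + 1) = n + m + l + 1 from rfl]
      rw [qPoch_succ q (q ^ (n + m)) l, pow_add q (n + m) l]
      ring
  have hiterx : ∀ l : ℕ, (Dq q)^[l] g x = ∑' m : ℕ,
      C m * (a ^ l * qPoch q (q ^ (n + m)) l) / qPoch q (a * x) (n + m + l) := by
    intro l
    have := hiter l 0
    simp only [pow_zero, one_mul] at this
    exact this
  -- the double family
  set F : ℕ → ℕ → ℂ := fun l m =>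
    v ^ (l.choose 2) * (z ^ l / qPoch q q l) *
      (C m * (a ^ l * qPoch q (q ^ (n + m)) l) / qPoch q (a * x) (n + m + l)) with hF
  have hFsum : Summable (Function.uncurry F) := by
    apply Summable.of_norm_bounded
      (g := fun p : ℕ × ℕ => (E / εq * E / (εq * ε0)) *
        ((‖a‖ * ‖z‖) ^ p.1 * (‖a‖ * ‖y‖) ^ p.2))
    · apply Summable.mul_left
      exact Summable.mul_of_nonneg
        (summable_geometric_of_lt_one (by positivity) haz')
        (summable_geometric_of_lt_one (by positivity) hay')
        (fun l => by positivity)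
        (fun m => by positivity)
    rintro ⟨l, m⟩
    rw [Function.uncurry, hF]
    simp only [norm_div, norm_mul, norm_pow]
    calc ‖v‖ ^ l.choose 2 * (‖z‖ ^ l / ‖qPoch q q l‖) *
          (‖C m‖ * (‖a‖ ^ l * ‖qPoch q (q ^ (n + m)) l‖) /
            ‖qPoch q (a * x) (n + m + l)‖)
        ≤ 1 * (‖z‖ ^ l / εq) *
            ((E / εq * (‖a‖ * ‖y‖) ^ m) * (‖a‖ ^ l * E) / ε0) := by
          gcongr
          · exact pow_le_one₀ (norm_nonneg v) hv
          · exact hεq l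
          · exact hCb m
          · exact hE _ (hqpow (n + m)) l
          · exact hε0 _
      _ = (E / εq * E / (εq * ε0)) * ((‖a‖ * ‖z‖) ^ l * (‖a‖ * ‖y‖) ^ m) := by
          rw [mul_pow, mul_pow]
          ring
  have hrow : ∀ l : ℕ, Summable (F l) := fun l => hFsum.prod_factor l
  have hcol : ∀ m : ℕ, Summable (fun l => F l m) := fun m => hFsum.prod_symm.prod_factor m
  -- LHS as a double sum
  have hLHS : Tq q v z g x = ∑' l : ℕ, ∑' m : ℕ, F l m := by
    rw [Tq]
    apply tsum_congr
    intro l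
    rw [hiterx l, ← tsum_mul_left]
  rw [hLHS, (Summable.tsum_comm' hFsum hrow hcol).symm]
  -- RHS rearrangement
  rw [← tsum_mul_left]
  apply tsum_congr
  intro m
  rw [← tsum_mul_left, ← tsum_mul_left]
  apply tsum_congr
  intro l
  -- termwise identity
  have hdec : qPoch q (a * x) (n + m + l) =
      qPoch q (a * x) n * (qPoch q (a * q ^ n * x) m * qPoch q (a * q ^ (n + m) * x) l) := by
    rw [show n + m + l = n + (m + l) from by omega, qPoch_add q (a * x) n (m + l)]
    rw [show (a * x) * q ^ n = a * q ^ n * x from by ring]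
    rw [qPoch_add q (a * q ^ n * x) m l]
    rw [show a * q ^ n * x * q ^ m = a * q ^ (n + m) * x from by rw [pow_add]; ring]
  rw [hF]
  simp only [hC]
  rw [hdec]
  exact term_split _ _ _ _ _ _ _ _ (hPax n) (hQ m) (hQ l) (hPk n m) (hPk (n + m) l)
    (mul_pow a z l)
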